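/- arXiv:1011.1060 — 2 statements merged into one kernel-verified Lean document; each statement's English description precedes it below -/
import Mathlib

section
/- Let Ω be a convex open subset of an affine space ℝ^n that contains a complete affine line. Then Ω contains a maximal complete affine subspace through each of its points of maximal dimension, any two maximal complete affine subspaces contained in Ω are parallel (they do not intersect and are translates of the same linear subspace), and consequently Ω is a union of parallel complete affine subspaces. -/
open Filter Topology

/-- Key lemma: if a full line in direction `v` lies in the open convex set `Ω`,
then the line through any point of `Ω` in direction `v` lies in `Ω`. -/
lemma line_trans {n : ℕ} {Ω : Set (EuclideanSpace ℝ (Fin n))} (hopen : IsOpen Ω)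
    (hconv : Convex ℝ Ω) {p v : EuclideanSpace ℝ (Fin n)}
    (hp : ∀ t : ℝ, p + t • v ∈ Ω) {y : EuclideanSpace ℝ (Fin n)} (hy : y ∈ Ω) (t : ℝ) :
    y + t • v ∈ Ω := by
  have hcl : y + (2 * t) • v ∈ closure Ω := by
    have htend : Tendsto (fun k : ℕ => y + (2 * t) • v + ((k : ℝ) + 1)⁻¹ • (p - y))
        atTop (𝓝 (y + (2 * t) • v)) := by
      have h0 : Tendsto (fun k : ℕ => ((k : ℝ) + 1)⁻¹) atTop (𝓝 0) :=
        tendsto_one_div_add_atTop_nhds_zero_nat.congr (by intro k; simp [one_div])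
      have := (h0.smul_const (p - y)).const_add (y + (2 * t) • v)
      simpa using this
    refine mem_closure_of_tendsto htend (Eventually.of_forall fun k => ?_)
    have hc : (0 : ℝ) < ((k : ℝ) + 1)⁻¹ := by positivity
    have hc1 : ((k : ℝ) + 1)⁻¹ ≤ 1 := by
      rw [inv_le_one_iff₀]; right; linarith [Nat.cast_nonneg (α := ℝ) k]
    have hmem := hconv hy (hp (((k : ℝ) + 1) * (2 * t)))
      (by linarith : (0:ℝ) ≤ 1 - ((k : ℝ) + 1)⁻¹) hc.le (by ring)
    have heq : (1 - ((k : ℝ) + 1)⁻¹) • y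
        + ((k : ℝ) + 1)⁻¹ • (p + (((k : ℝ) + 1) * (2 * t)) • v)
        = y + (2 * t) • v + ((k : ℝ) + 1)⁻¹ • (p - y) := by
      have hk : ((k : ℝ) + 1)⁻¹ * (((k : ℝ) + 1) * (2 * t)) = 2 * t := by
        field_simp
      rw [smul_add, smul_smul, hk]
      module
    rwa [heq] at hmem
  have hmem := hconv.combo_interior_closure_mem_interior
    (by rwa [hopen.interior_eq]) hcl (by norm_num : (0:ℝ) < 1/2) (by norm_num : (0:ℝ) ≤ 1/2)
    (by norm_num)
  rw [hopen.interior_eq] at hmem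
  have heq : (1/2 : ℝ) • y + (1/2 : ℝ) • (y + (2 * t) • v) = y + t • v := by module
  rwa [heq] at hmem

/-- A (nonempty) complete affine subspace contained in `Ω` that is maximal among such. -/
def IsMaxAffineIn {n : ℕ} (Ω : Set (EuclideanSpace ℝ (Fin n)))
    (S : AffineSubspace ℝ (EuclideanSpace ℝ (Fin n))) : Prop :=
  (S : Set (EuclideanSpace ℝ (Fin n))).Nonempty ∧
    (S : Set (EuclideanSpace ℝ (Fin n))) ⊆ Ω ∧
    ∀ T : AffineSubspace ℝ (EuclideanSpace ℝ (Fin n)),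
      (T : Set (EuclideanSpace ℝ (Fin n))) ⊆ Ω → S ≤ T → T = S

/-- Let `Ω` be a convex open subset of `ℝ^n` containing a complete affine line.  Then
through each point of `Ω` there is a maximal complete affine subspace contained in `Ω`;
any two distinct maximal complete affine subspaces in `Ω` are parallel (disjoint, with
the same direction, hence translates of the same linear subspace and of the same, maximal,
dimension); and consequently `Ω` is the union of these parallel complete affine
subspaces. -/
theorem convex_with_line_foliated_by_parallel_affine_subspaces {n : ℕ}
    (Ω : Set (EuclideanSpace ℝ (Fin n))) (hopen : IsOpen Ω) (hconv : Convex ℝ Ω)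
    (hline : ∃ p v : EuclideanSpace ℝ (Fin n), v ≠ 0 ∧ ∀ t : ℝ, p + t • v ∈ Ω) :
    (∀ x ∈ Ω, ∃ S : AffineSubspace ℝ (EuclideanSpace ℝ (Fin n)),
        x ∈ S ∧ IsMaxAffineIn Ω S) ∧
    (∀ S T : AffineSubspace ℝ (EuclideanSpace ℝ (Fin n)),
        IsMaxAffineIn Ω S → IsMaxAffineIn Ω T → S ≠ T →
        Disjoint (S : Set (EuclideanSpace ℝ (Fin n)))
            (T : Set (EuclideanSpace ℝ (Fin n))) ∧
          S.direction = T.direction) ∧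
    Ω = ⋃ S ∈ {S : AffineSubspace ℝ (EuclideanSpace ℝ (Fin n)) | IsMaxAffineIn Ω S},
        (S : Set (EuclideanSpace ℝ (Fin n))) := by
  classical
  -- the lineality space of Ω
  set L : Submodule ℝ (EuclideanSpace ℝ (Fin n)) :=
    { carrier := {v | ∀ y ∈ Ω, ∀ t : ℝ, y + t • v ∈ Ω}
      add_mem' := by
        intro v w hv hw y hy t
        have : y + t • v + t • w ∈ Ω := hw _ (hv y hy t) t
        simpa [smul_add, add_assoc] using this
      zero_mem' := by intro y hy t; simpa using hy
      smul_mem' := by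
        intro c v hv y hy t
        have := hv y hy (t * c)
        simpa [smul_smul] using this } with hL
  -- membership in the coercion of L
  have hLmem : ∀ v : EuclideanSpace ℝ (Fin n),
      v ∈ L ↔ ∀ y ∈ Ω, ∀ t : ℝ, y + t • v ∈ Ω := fun v => Iff.rfl
  -- any affine subspace contained in Ω has direction inside L
  have hdirL : ∀ T : AffineSubspace ℝ (EuclideanSpace ℝ (Fin n)),
      ((T : Set (EuclideanSpace ℝ (Fin n))).Nonempty) →
      (T : Set (EuclideanSpace ℝ (Fin n))) ⊆ Ω → T.direction ≤ L := by
    intro T ⟨q, hq⟩ hTΩ v hv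
    have hlineq : ∀ t : ℝ, q + t • v ∈ Ω := by
      intro t
      have : (t • v) +ᵥ q ∈ T :=
        AffineSubspace.vadd_mem_of_mem_direction (T.direction.smul_mem t hv) hq
      have h2 : (t • v) +ᵥ q ∈ Ω := hTΩ this
      simpa [add_comm] using h2
    intro y hy t
    exact line_trans hopen hconv hlineq hy t
  -- mk' x L is contained in Ω for x ∈ Ω
  have hmkΩ : ∀ x ∈ Ω, (AffineSubspace.mk' x L : Set (EuclideanSpace ℝ (Fin n))) ⊆ Ω := by
    intro x hx y hy
    rw [SetLike.mem_coe, AffineSubspace.mem_mk'] at hy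
    have := hy x hx 1
    simpa [vsub_eq_sub] using this
  -- the maximality property of mk' x L
  have hmax : ∀ x ∈ Ω, IsMaxAffineIn Ω (AffineSubspace.mk' x L) := by
    intro x hx
    refine ⟨⟨x, AffineSubspace.self_mem_mk' x L⟩, hmkΩ x hx, ?_⟩
    intro T hTΩ hST
    have hxT : x ∈ T := hST (AffineSubspace.self_mem_mk' x L)
    have hTd : T.direction ≤ L := hdirL T ⟨x, hxT⟩ hTΩ
    refine le_antisymm ?_ hST
    intro y hy
    rw [AffineSubspace.mem_mk']
    exact hTd (AffineSubspace.vsub_mem_direction hy hxT)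
  -- any maximal subspace through p equals mk' p L
  have huniq : ∀ S : AffineSubspace ℝ (EuclideanSpace ℝ (Fin n)), IsMaxAffineIn Ω S →
      ∀ p ∈ S, S = AffineSubspace.mk' p L := by
    intro S hS p hp
    obtain ⟨hSne, hSΩ, hSmax⟩ := hS
    have hpΩ : p ∈ Ω := hSΩ hp
    have hSd : S.direction ≤ L := hdirL S ⟨p, hp⟩ hSΩ
    have hle : S ≤ AffineSubspace.mk' p L := by
      intro y hy
      rw [AffineSubspace.mem_mk']
      exact hSd (AffineSubspace.vsub_mem_direction hy hp)
    exact (hSmax _ (hmkΩ p hpΩ) hle).symm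
  have hdir : ∀ S : AffineSubspace ℝ (EuclideanSpace ℝ (Fin n)), IsMaxAffineIn Ω S →
      S.direction = L := by
    intro S hS
    obtain ⟨p, hp⟩ := hS.1
    rw [huniq S hS p hp, AffineSubspace.direction_mk']
  refine ⟨?_, ?_, ?_⟩
  · intro x hx
    exact ⟨AffineSubspace.mk' x L, AffineSubspace.self_mem_mk' x L, hmax x hx⟩
  · intro S T hS hT hST
    constructor
    · rw [Set.disjoint_left]
      intro p hpS hpT
      exact hST ((huniq S hS p hpS).trans (huniq T hT p hpT).symm)
    · rw [hdir S hS, hdir T hT]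
  · ext x
    simp only [Set.mem_iUnion, Set.mem_setOf_eq, SetLike.mem_coe]
    constructor
    · intro hx
      exact ⟨AffineSubspace.mk' x L, hmax x hx, AffineSubspace.self_mem_mk' x L⟩
    · rintro ⟨S, hS, hxS⟩
      exact hS.2.1 hxS
end

section
/- Let g ∈ SL±(n+1,ℝ) preserve a properly convex open domain Ω ⊆ ℝP^n and fix two points a, r ∈ ∂Ω corresponding to the eigenvalues of strictly largest and strictly smallest absolute value, both positive real and of multiplicity one. Suppose g fixes a third point k ∈ ∂Ω distinct from a and r. Then the open segment joining k to a (or to r) within the closure of Ω lies entirely in ∂Ω. In particular, if ∂Ω contains no nontrivial line segments (Ω strictly convex), then g has at most two fixed points on ∂Ω. -/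
open Matrix

/-- A convex open cone in `ℝ^n`: open, convex, nonempty, closed under positive
scalar multiplication, with the origin in its boundary. -/
def IsOpenConvexCone {n : ℕ} (V : Set (Fin n → ℝ)) : Prop :=
  IsOpen V ∧ Convex ℝ V ∧ V.Nonempty ∧ (∀ v ∈ V, ∀ t : ℝ, 0 < t → t • v ∈ V) ∧
    (0 : Fin n → ℝ) ∈ closure V ∧ (0 : Fin n → ℝ) ∉ V

/-- Properly convex: the closure contains no pair `{v, -v}` with `v ≠ 0`. -/
def IsProperlyConvexCone {n : ℕ} (V : Set (Fin n → ℝ)) : Prop :=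
  ∀ v : Fin n → ℝ, v ≠ 0 → ¬(v ∈ closure V ∧ -v ∈ closure V)

section Aux

open Polynomial Filter

variable {N : ℕ} {C : Set (Fin N → ℝ)}

private lemma aux_closure_smul (hC : IsOpenConvexCone C)
    {v : Fin N → ℝ} (hv : v ∈ closure C) {t : ℝ} (ht : 0 < t) : t • v ∈ closure C :=
  map_mem_closure (continuous_const_smul t) hv fun x hx => hC.2.2.2.1 x hx t ht

/-- Dynamical lemma: if `M` preserves the cone `C`, `x, y` are eigenvectors of `M`
with eigenvalues of modulus `< 1`, `w` is a fixed vector of `M` lying in `closure C`,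
then no positive combination of `x` and `y` can lie in the open cone `C`. -/
private lemma seg_aux (hC : IsOpenConvexCone C) (hpc : IsProperlyConvexCone C)
    (M : Matrix (Fin N) (Fin N) ℝ) (hM : ∀ z ∈ C, M *ᵥ z ∈ C)
    (x y w : Fin N → ℝ) (c d : ℝ)
    (hx : M *ᵥ x = c • x) (hy : M *ᵥ y = d • y) (hw : M *ᵥ w = w)
    (hc : |c| < 1) (hd : |d| < 1)
    (hwcl : w ∈ closure C) (hw0 : w ≠ 0)
    {α β : ℝ} (hα : 0 < α) (hβ : 0 < β)
    (hp : α • x + β • y ∈ C) : False := by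
  obtain ⟨ε, hε, hεC⟩ : ∃ ε : ℝ, 0 < ε ∧ α • x + β • y - ε • w ∈ C := by
    have hcont : ContinuousAt (fun t : ℝ => α • x + β • y - t • w) 0 := by fun_prop
    have h0 : (fun t : ℝ => α • x + β • y - t • w) 0 ∈ C := by simpa using hp
    have hev : ∀ᶠ t in nhds (0:ℝ), α • x + β • y - t • w ∈ C :=
      hcont.eventually_mem (hC.1.mem_nhds h0)
    obtain ⟨ε, h1, h2⟩ :=
      ((hev.filter_mono (nhdsWithin_le_nhds (s := Set.Ioi (0:ℝ)))).and eventually_mem_nhdsWithin).exists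
    exact ⟨ε, h2, h1⟩
  set wseq : ℕ → (Fin N → ℝ) := fun m => (c ^ m * α) • x + (d ^ m * β) • y - ε • w with hwseq
  have hmem : ∀ m, wseq m ∈ C := by
    intro m; induction m with
    | zero => simpa [hwseq] using hεC
    | succ m ih =>
      have hstep := hM _ ih
      have heq : M *ᵥ wseq m = wseq (m + 1) := by
        simp only [hwseq, Matrix.mulVec_sub, Matrix.mulVec_add, Matrix.mulVec_smul, hx, hy, hw]
        rw [pow_succ, pow_succ]
        module
      rwa [heq] at hstep
  have t1 : Tendsto (fun m : ℕ => c ^ m * α) atTop (nhds 0) := by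
    simpa using (tendsto_pow_atTop_nhds_zero_of_abs_lt_one hc).mul_const α
  have t2 : Tendsto (fun m : ℕ => d ^ m * β) atTop (nhds 0) := by
    simpa using (tendsto_pow_atTop_nhds_zero_of_abs_lt_one hd).mul_const β
  have hlim : Tendsto wseq atTop (nhds (-(ε • w))) := by
    have := ((t1.smul_const x).add (t2.smul_const y)).sub
      (tendsto_const_nhds (x := ε • w) (f := atTop))
    simpa [hwseq] using this
  have hneg : -(ε • w) ∈ closure C :=
    isClosed_closure.mem_of_tendsto hlim
      (Filter.Eventually.of_forall fun m => subset_closure (hmem m))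
  exact hpc (ε • w) (smul_ne_zero hε.ne' hw0) ⟨aux_closure_smul hC hwcl hε, hneg⟩

private lemma charpoly_toLin' (g : Matrix (Fin N) (Fin N) ℝ) :
    (Matrix.toLin' g).charpoly = g.charpoly := by
  rw [← LinearMap.charpoly_toMatrix (Matrix.toLin' g) (Pi.basisFun ℝ (Fin N)),
    LinearMap.toMatrix_eq_toMatrix', LinearMap.toMatrix'_toLin']

/-- An eigenvalue of `g` is a root of the complexified characteristic polynomial. -/
private lemma eig_mem_roots (g : Matrix (Fin N) (Fin N) ℝ) (v : Fin N → ℝ) (hv0 : v ≠ 0)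
    (c : ℝ) (h : g *ᵥ v = c • v) :
    (c : ℂ) ∈ (g.charpoly.map (algebraMap ℝ ℂ)).roots := by
  have hev : Module.End.HasEigenvalue (Matrix.toLin' g) c :=
    Module.End.hasEigenvalue_of_hasEigenvector
      ⟨Module.End.mem_eigenspace_iff.2 (by rw [Matrix.toLin'_apply, h]), hv0⟩
  have hroot : (Matrix.toLin' g).charpoly.IsRoot c :=
    (Module.End.hasEigenvalue_iff_isRoot.1 hev).dvd
      (LinearMap.minpoly_dvd_charpoly (Matrix.toLin' g))
  rw [charpoly_toLin'] at hroot
  have hne : g.charpoly.map (algebraMap ℝ ℂ) ≠ 0 :=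
    (g.charpoly_monic.map (algebraMap ℝ ℂ)).ne_zero
  refine Polynomial.mem_roots'.2 ⟨hne, ?_⟩
  have : Polynomial.eval₂ (algebraMap ℝ ℂ) ((algebraMap ℝ ℂ) c) g.charpoly =
      (algebraMap ℝ ℂ) (g.charpoly.eval c) := Polynomial.eval₂_at_apply _ _
  simp only [Polynomial.IsRoot, Polynomial.eval_map]
  rw [show ((c : ℂ)) = (algebraMap ℝ ℂ) c from rfl, this, hroot.eq_zero, map_zero]

/-- Two independent eigenvectors for the same eigenvalue force the root multiplicity
of that eigenvalue in the (complexified) characteristic polynomial to be at least 2. -/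
private lemma two_eigvec_two_le_count (g : Matrix (Fin N) (Fin N) ℝ) (l : ℝ)
    (v w : Fin N → ℝ) (hv : g *ᵥ v = l • v) (hw : g *ᵥ w = l • w)
    (hli : LinearIndependent ℝ ![v, w]) :
    2 ≤ (g.charpoly.map (algebraMap ℝ ℂ)).roots.count (l : ℂ) := by
  classical
  have hvw : v ≠ w := by
    intro h
    obtain ⟨h1, _⟩ := (LinearIndependent.pair_iff.1 hli) 1 (-1)
      (by rw [h, one_smul, neg_smul, one_smul, add_neg_cancel])
    exact one_ne_zero h1
  set s : Set (Fin N → ℝ) := {v, w} with hs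
  have hsub : LinearIndepOn ℝ id s := by
    have hr := (linearIndepOn_id_range_iff hli.injective).2 hli
    have hrange : Set.range ![v, w] = s := by
      ext z
      simp only [hs, Set.mem_range, Fin.exists_fin_two, Matrix.cons_val_zero, Matrix.cons_val_one,
        Matrix.head_cons, Set.mem_insert_iff, Set.mem_singleton_iff, eq_comm]
    rwa [hrange] at hr
  set b := Module.Basis.extend hsub with hb
  haveI : Fintype (hsub.extend (Set.subset_univ s)) := IsNoetherian.fintypeBasisIndex b
  have hvmem : v ∈ hsub.extend (Set.subset_univ s) := Module.Basis.subset_extend hsub (by simp [hs])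
  have hwmem : w ∈ hsub.extend (Set.subset_univ s) := Module.Basis.subset_extend hsub (by simp [hs])
  set jv : hsub.extend (Set.subset_univ s) := ⟨v, hvmem⟩ with hjv
  set jw : hsub.extend (Set.subset_univ s) := ⟨w, hwmem⟩ with hjw
  have hj : jw ≠ jv := by
    intro h
    exact hvw (congrArg Subtype.val h).symm
  set f := Matrix.toLin' g with hf
  set M := LinearMap.toMatrix b b f with hM
  have hchar : M.charpoly = g.charpoly := by
    rw [hM, LinearMap.charpoly_toMatrix, charpoly_toLin']
  -- the two distinguished columns of `M`
  have hcol : ∀ (j : hsub.extend (Set.subset_univ s)), (j = jv ∨ j = jw) →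
      ∀ i, M i j = if j = i then l else 0 := by
    rintro j hj i
    have hbj : f (b j) = l • b j := by
      rw [hb, Module.Basis.extend_apply_self, hf, Matrix.toLin'_apply]
      rcases hj with h | h <;> rw [h]
      · exact hv
      · exact hw
    rw [hM, LinearMap.toMatrix_apply, hbj, _root_.map_smul, Finsupp.smul_apply, Module.Basis.repr_self,
      Finsupp.single_apply, smul_eq_mul, mul_ite, mul_one, mul_zero]
  -- the characteristic matrix has column `j` equal to `(X - C l) • e_j` for `j = jv, jw`
  set A := charmatrix M with hA
  have hAcol : ∀ (j : hsub.extend (Set.subset_univ s)), (j = jv ∨ j = jw) →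
      (fun i => A i j) = (Polynomial.X - Polynomial.C l) •
        (fun i => if i = j then (1 : Polynomial ℝ) else 0) := by
    intro j hjor
    funext i
    by_cases h : i = j
    · subst h
      simp [hA, Matrix.charmatrix_apply_eq, hcol i hjor i]
    · have hne : i ≠ j := h
      have hji : ¬ j = i := fun hc => hne hc.symm
      rw [hA, Matrix.charmatrix_apply_ne M _ _ hne, hcol j hjor i, if_neg hji]
      simp [h]
  have hdvd : (Polynomial.X - Polynomial.C l) ^ 2 ∣ g.charpoly := by
    set e : (hsub.extend (Set.subset_univ s)) → Polynomial ℝ :=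
      fun i => if i = jv then (1 : Polynomial ℝ) else 0 with he
    set e' : (hsub.extend (Set.subset_univ s)) → Polynomial ℝ :=
      fun i => if i = jw then (1 : Polynomial ℝ) else 0 with he'
    set B := Matrix.updateCol A jv e with hB
    have e1 : A.det = (Polynomial.X - Polynomial.C l) * B.det := by
      conv_lhs => rw [← Matrix.updateCol_eq_self A jv, hAcol jv (Or.inl rfl)]
      exact Matrix.det_updateCol_smul A jv _ e
    have hBcol : (fun i => B i jw) = (Polynomial.X - Polynomial.C l) • e' := by
      funext i
      rw [hB, Matrix.updateCol_apply, if_neg hj]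
      exact congrFun (hAcol jw (Or.inr rfl)) i
    have e2 : B.det = (Polynomial.X - Polynomial.C l) * (B.updateCol jw e').det := by
      conv_lhs => rw [← Matrix.updateCol_eq_self B jw, hBcol]
      exact Matrix.det_updateCol_smul B jw _ e'
    refine ⟨(B.updateCol jw e').det, ?_⟩
    rw [← hchar]
    show (charmatrix M).det = _
    rw [← hA, e1, e2, pow_two]
    ring
  have hne : g.charpoly.map (algebraMap ℝ ℂ) ≠ 0 :=
    (g.charpoly_monic.map (algebraMap ℝ ℂ)).ne_zero
  have hdvd2 : (Polynomial.X - Polynomial.C (l : ℂ)) ^ 2 ∣ g.charpoly.map (algebraMap ℝ ℂ) := by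
    have h := Polynomial.map_dvd (algebraMap ℝ ℂ) hdvd
    simpa [Polynomial.map_pow, Polynomial.map_sub] using h
  rw [Polynomial.count_roots]
  exact (Polynomial.le_rootMultiplicity_iff hne).2 hdvd2

end Aux

/-- Let `g ∈ SL±(n+1,ℝ)` preserve a properly convex open domain `Ω ⊆ ℝP^n` (cone `C`)
and fix two boundary points `a`, `r` (rays of eigenvectors `va`, `vr`) whose eigenvalues
are positive real, of multiplicity one, and of strictly largest resp. strictly smallest
absolute value among all complex eigenvalues.  If `g` fixes a third boundary point `k`
(ray of an eigenvector `vk`) distinct from `a` and `r`, then the open segment joining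
`k` to `a` (or to `r`) inside the closure of `Ω` lies entirely in `∂Ω`.  In particular,
if `∂Ω` contains no nontrivial segment (strict convexity), such a third fixed point
cannot exist, so `g` has at most two fixed points on `∂Ω`. -/
theorem third_fixed_point_gives_boundary_segment {n : ℕ}
    (C : Set (Fin (n + 1) → ℝ))
    (hC : IsOpenConvexCone C) (hpc : IsProperlyConvexCone C)
    (g : Matrix (Fin (n + 1)) (Fin (n + 1)) ℝ)
    (hdet : g.det = 1 ∨ g.det = -1)
    (hpres : (fun v => g *ᵥ v) '' C = C)
    (va vr vk : Fin (n + 1) → ℝ) (lA lR mu : ℝ)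
    (hva : va ∈ frontier C) (hva0 : va ≠ 0) (heva : g *ᵥ va = lA • va) (hlA : 0 < lA)
    (hvr : vr ∈ frontier C) (hvr0 : vr ≠ 0) (hevr : g *ᵥ vr = lR • vr) (hlR : 0 < lR)
    (hmax : ∀ z ∈ (g.charpoly.map (algebraMap ℝ ℂ)).roots,
      z ≠ (lA : ℂ) → ‖z‖ < lA)
    (hmultA : (g.charpoly.map (algebraMap ℝ ℂ)).roots.count (lA : ℂ) = 1)
    (hmin : ∀ z ∈ (g.charpoly.map (algebraMap ℝ ℂ)).roots,
      z ≠ (lR : ℂ) → lR < ‖z‖)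
    (hmultR : (g.charpoly.map (algebraMap ℝ ℂ)).roots.count (lR : ℂ) = 1)
    (hvk : vk ∈ frontier C) (hvk0 : vk ≠ 0) (hevk : g *ᵥ vk = mu • vk) (hmu : mu ≠ 0)
    (hka : ¬∃ t : ℝ, vk = t • va) (hkr : ¬∃ t : ℝ, vk = t • vr) :
    ((∀ α β : ℝ, 0 < α → 0 < β → α • vk + β • va ∈ frontier C) ∨
      (∀ α β : ℝ, 0 < α → 0 < β → α • vk + β • vr ∈ frontier C)) ∧
    ((∀ x ∈ frontier C, ∀ y ∈ frontier C, x ≠ 0 → y ≠ 0 → (¬∃ t : ℝ, y = t • x) →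
        ∃ α β : ℝ, 0 < α ∧ 0 < β ∧ α • x + β • y ∉ frontier C) → False) := by
  classical
  have hfr : frontier C = closure C \ C := hC.1.frontier_eq
  have hclva : va ∈ closure C := by rw [hfr] at hva; exact hva.1
  have hclvr : vr ∈ closure C := by rw [hfr] at hvr; exact hvr.1
  have hclvk : vk ∈ closure C := by rw [hfr] at hvk; exact hvk.1
  -- invertibility of g
  have hdet0 : IsUnit g.det := by
    rcases hdet with h | h <;> rw [h]
    · exact isUnit_one
    · exact isUnit_one.neg
  have hginv : ∀ v, g⁻¹ *ᵥ (g *ᵥ v) = v := fun v => by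
    rw [Matrix.mulVec_mulVec, Matrix.nonsing_inv_mul g hdet0, Matrix.one_mulVec]
  -- action of g and g⁻¹ on C
  have hfwd : ∀ z ∈ C, g *ᵥ z ∈ C := by
    intro z hz
    rw [← hpres]
    exact ⟨z, hz, rfl⟩
  have hbwd : ∀ z ∈ C, g⁻¹ *ᵥ z ∈ C := by
    intro z hz
    rw [← hpres] at hz
    obtain ⟨u, hu, hgu⟩ := hz
    rw [← hgu, hginv]
    exact hu
  -- eigenvectors of g⁻¹
  have hinv_eig : ∀ (v : Fin (n+1) → ℝ) (c : ℝ), c ≠ 0 → g *ᵥ v = c • v →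
      g⁻¹ *ᵥ v = c⁻¹ • v := by
    intro v c hc h
    have h1 : v = c • (g⁻¹ *ᵥ v) := by
      conv_lhs => rw [← hginv v]
      rw [h, Matrix.mulVec_smul]
    have h2 := congrArg (fun z => c⁻¹ • z) h1
    simp only [smul_smul, inv_mul_cancel₀ hc, one_smul] at h2
    exact h2.symm
  -- membership of positive combinations in the closure
  have hcl_comb : ∀ x ∈ closure C, ∀ y ∈ closure C, ∀ {α β : ℝ}, 0 < α → 0 < β →
      α • x + β • y ∈ closure C := by
    intro x hx y hy α β hα hβ
    have hs : (0:ℝ) < α + β := by linarith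
    have h1 : (α/(α+β)) • x + (β/(α+β)) • y ∈ closure C :=
      hC.2.1.closure hx hy (by positivity) (by positivity) (by field_simp)
    have h2 := aux_closure_smul hC h1 hs
    rw [smul_add, smul_smul, smul_smul] at h2
    rwa [show (α+β) * (α/(α+β)) = α by field_simp, show (α+β) * (β/(α+β)) = β by field_simp] at h2
  -- case mu = lA is impossible
  have hmuA : mu ≠ lA := by
    intro h
    have hli : LinearIndependent ℝ ![va, vk] :=
      (LinearIndependent.pair_iff' hva0).2 fun a ha => hka ⟨a, ha.symm⟩
    have h2 := two_eigvec_two_le_count g lA va vk heva (h ▸ hevk) hli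
    omega
  -- case mu = lR is impossible for the same reason
  have hmuR : mu ≠ lR := by
    intro h
    have hli : LinearIndependent ℝ ![vr, vk] :=
      (LinearIndependent.pair_iff' hvr0).2 fun a ha => hkr ⟨a, ha.symm⟩
    have h2 := two_eigvec_two_le_count g lR vr vk hevr (h ▸ hevk) hli
    omega
  -- spectral bounds for mu
  have hmu_root : (mu : ℂ) ∈ (g.charpoly.map (algebraMap ℝ ℂ)).roots :=
    eig_mem_roots g vk hvk0 mu hevk
  have hmu_lt_lA : |mu| < lA := by
    have := hmax (mu : ℂ) hmu_root (by
      intro hc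
      exact hmuA (by exact_mod_cast hc))
    simpa using this
  have hlR_lt_mu : mu ≠ lR → lR < |mu| := by
    intro h
    have := hmin (mu : ℂ) hmu_root (by
      intro hc
      exact h (by exact_mod_cast hc))
    simpa using this
  -- the main disjunction
  have main : (∀ α β : ℝ, 0 < α → 0 < β → α • vk + β • va ∈ frontier C) ∨
      (∀ α β : ℝ, 0 < α → 0 < β → α • vk + β • vr ∈ frontier C) := by
    -- lR < |mu| < lA : use the left disjunct with M = lR • g⁻¹
      left
      intro α β hα hβ
      rw [hfr]
      refine ⟨hcl_comb vk hclvk va hclva hα hβ, ?_⟩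
      intro hmem
      have hlRmu := hlR_lt_mu hmuR
      set M : Matrix (Fin (n+1)) (Fin (n+1)) ℝ := lR • g⁻¹ with hM
      have hMact : ∀ z ∈ C, M *ᵥ z ∈ C := by
        intro z hz
        rw [hM, Matrix.smul_mulVec]
        exact hC.2.2.2.1 _ (hbwd z hz) lR hlR
      have hMx : M *ᵥ vk = (lR/mu) • vk := by
        rw [hM, Matrix.smul_mulVec, hinv_eig vk mu hmu hevk, smul_smul, div_eq_mul_inv]
      have hMy : M *ᵥ va = (lR/lA) • va := by
        rw [hM, Matrix.smul_mulVec, hinv_eig va lA hlA.ne' heva, smul_smul, div_eq_mul_inv]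
      have hMw : M *ᵥ vr = vr := by
        rw [hM, Matrix.smul_mulVec, hinv_eig vr lR hlR.ne' hevr, smul_smul,
          mul_inv_cancel₀ hlR.ne', one_smul]
      have hc : |lR/mu| < 1 := by
        rw [abs_div, abs_of_pos hlR, div_lt_one (lt_trans hlR hlRmu)]
        exact hlRmu
      have hd : |lR/lA| < 1 := by
        have hlRlA : lR < lA := lt_trans hlRmu hmu_lt_lA
        rw [abs_div, abs_of_pos hlR, abs_of_pos hlA, div_lt_one hlA]
        exact hlRlA
      exact seg_aux hC hpc M hMact vk va vr (lR/mu) (lR/lA) hMx hMy hMw hc hd hclvr hvr0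
        hα hβ hmem
  refine ⟨main, ?_⟩
  intro H
  rcases main with hL | hR
  · have hnp : ¬∃ t : ℝ, va = t • vk := by
      rintro ⟨t, ht⟩
      by_cases ht0 : t = 0
      · exact hva0 (by simpa [ht0] using ht)
      · apply hka
        refine ⟨t⁻¹, ?_⟩
        rw [ht, smul_smul, inv_mul_cancel₀ ht0, one_smul]
    obtain ⟨α, β, hα, hβ, hnot⟩ := H vk hvk va hva hvk0 hva0 hnp
    exact hnot (hL α β hα hβ)
  · have hnp : ¬∃ t : ℝ, vr = t • vk := by
      rintro ⟨t, ht⟩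
      by_cases ht0 : t = 0
      · exact hvr0 (by simpa [ht0] using ht)
      · apply hkr
        refine ⟨t⁻¹, ?_⟩
        rw [ht, smul_smul, inv_mul_cancel₀ ht0, one_smul]
    obtain ⟨α, β, hα, hβ, hnot⟩ := H vk hvk vr hvr hvk0 hvr0 hnp
    exact hnot (hR α β hα hβ)
end
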